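/- Suppose condition A1 holds and there exists M > 0 with ‖c(x)‖ < M for all x. If lim_{‖x‖→∞} ∫_{R(x) ∩ In(x)} q(x,y) dy = 0, where In(x) = {y : ‖y‖ ≤ ‖x‖}, then C₁ := limsup_{‖x‖→∞} ∫_{R(x)} q(x,y)(1 − α(x,y)) dy = 0. -/

import Mathlib

open MeasureTheory Filter

noncomputable section

abbrev Ed (d : ℕ) := EuclideanSpace ℝ (Fin d)

variable {d : ℕ}

/-- The quadratic form `vᵀ M v`. -/
def quadForm (M : Matrix (Fin d) (Fin d) ℝ) (v : Ed d) : ℝ :=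
  ∑ i, ∑ j, v i * M i j * v j

/-- A matrix acting on a Euclidean vector. -/
def mvec (M : Matrix (Fin d) (Fin d) ℝ) (v : Ed d) : Ed d :=
  (WithLp.equiv 2 (Fin d → ℝ)).symm (M.mulVec (WithLp.equiv 2 (Fin d → ℝ) v))

/-- Gaussian proposal density with mean `c x` and covariance `h • G x`. -/
def mhq (h : ℝ) (c : Ed d → Ed d) (G : Ed d → Matrix (Fin d) (Fin d) ℝ)
    (x y : Ed d) : ℝ :=
  (2 * Real.pi * h) ^ (-(d : ℝ) / 2) * (G x).det ^ (-(1 : ℝ) / 2) *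
    Real.exp (-quadForm (G x)⁻¹ (y - c x) / (2 * h))

/-- Metropolis–Hastings acceptance probability. -/
def mhAccept (f : Ed d → ℝ) (q : Ed d → Ed d → ℝ) (x y : Ed d) : ℝ :=
  min 1 (f y * q y x / (f x * q x y))

/-- Metropolis–Hastings rejection probability. -/
def mhRej (f : Ed d → ℝ) (q : Ed d → Ed d → ℝ) (x : Ed d) : ℝ :=
  1 - ∫ y, mhAccept f q x y * q x y

/-- The Metropolis–Hastings transition kernel. -/
def mhKernel (f : Ed d → ℝ) (q : Ed d → Ed d → ℝ) (x : Ed d) : Measure (Ed d) :=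
  volume.withDensity (fun y => ENNReal.ofReal (mhAccept f q x y * q x y)) +
    ENNReal.ofReal (mhRej f q x) • Measure.dirac x

/-- The `n`-step kernel. -/
def iterKernel (P : Ed d → Measure (Ed d)) : ℕ → Ed d → Measure (Ed d)
  | 0, x => Measure.dirac x
  | n + 1, x => (P x).bind (iterKernel P n)

/-- The target probability measure with density `f`. -/
def targetMeasure (f : Ed d → ℝ) : Measure (Ed d) :=
  volume.withDensity fun x => ENNReal.ofReal (f x)

/-- Geometric ergodicity of the chain `P` with target `F`. -/
def GeomErgodic (P : Ed d → Measure (Ed d)) (F : Measure (Ed d)) : Prop :=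
  ∃ (L : Ed d → ℝ) (ρ : ℝ), (∀ x, 0 ≤ L x) ∧ 0 < ρ ∧ ρ < 1 ∧
    ∀ (n : ℕ) (x : Ed d) (A : Set (Ed d)), MeasurableSet A →
      |(iterKernel P n x A).toReal - (F A).toReal| ≤ L x * ρ ^ n

/-- Potential rejection region. -/
def rejSet (f : Ed d → ℝ) (q : Ed d → Ed d → ℝ) (x : Ed d) : Set (Ed d) :=
  {y | f y * q y x < f x * q x y}

/-- The filter of `‖x‖ → ∞`. -/
def normAtTop (d : ℕ) : Filter (Ed d) := Filter.comap (fun x => ‖x‖) Filter.atTop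

/-- The constant `C₁`. -/
def C1const (f : Ed d → ℝ) (q : Ed d → Ed d → ℝ) : ℝ :=
  limsup (fun x => ∫ y in rejSet f q x, q x y * (1 - mhAccept f q x y)) (normAtTop d)

/-- The constant `C₂(s)`. -/
def C2const (d : ℕ) (h s : ℝ) (G₁ G₂ : Matrix (Fin d) (Fin d) ℝ) : ℝ :=
  h ^ (-(d : ℝ) / 2) * (Real.pi / 2) ^ (((d : ℝ) - 2) / 2) *
    (G₂.det / G₁.det) ^ ((1 : ℝ) / 2) * Real.exp (h * s ^ 2 / 2) *
    ∫ r in Set.Ioi (0 : ℝ), Real.exp (-(r - h * s) ^ 2 / (2 * h)) * r ^ ((d : ℝ) - 1)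

/-- Loewner order. -/
def LoewnerLE (A B : Matrix (Fin d) (Fin d) ℝ) : Prop := (B - A).PosSemidef

/-- A2 : bounded on bounded sets. -/
def BddOnBounded (c : Ed d → Ed d) : Prop :=
  ∀ M : ℝ, ∃ K : ℝ, ∀ x : Ed d, ‖x‖ ≤ M → ‖c x‖ ≤ K

/-- `f` is bounded away from `0` and `∞` on compact sets. -/
def BddAwayOnCompacts (f : Ed d → ℝ) : Prop :=
  ∀ K : Set (Ed d), IsCompact K → ∃ a b : ℝ, 0 < a ∧ ∀ x ∈ K, a ≤ f x ∧ f x ≤ b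


section AuxC1

open Matrix

lemma sum_sq_eq_norm_sq (v : Ed d) : ∑ i, v i ^ 2 = ‖v‖ ^ 2 := by
  rw [EuclideanSpace.norm_eq, Real.sq_sqrt (by positivity)]
  simp [Real.norm_eq_abs, sq_abs]

lemma quadForm_dot (M : Matrix (Fin d) (Fin d) ℝ) (v : Ed d) :
    quadForm M v = (fun i => v i) ⬝ᵥ (M *ᵥ fun i => v i) := by
  simp only [quadForm, dotProduct, mulVec, Finset.mul_sum]
  exact Finset.sum_congr rfl fun i _ => Finset.sum_congr rfl fun j _ => by ring

lemma quadForm_nonneg {M : Matrix (Fin d) (Fin d) ℝ} (hM : M.PosSemidef) (v : Ed d) :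
    0 ≤ quadForm M v := by
  rw [quadForm_dot]
  simpa using hM.dotProduct_mulVec_nonneg (fun i => v i)

lemma quadForm_mono {A B : Matrix (Fin d) (Fin d) ℝ} (hAB : LoewnerLE A B) (v : Ed d) :
    quadForm A v ≤ quadForm B v := by
  have h0 := quadForm_nonneg hAB v
  have hsub : quadForm (B - A) v = quadForm B v - quadForm A v := by
    simp [quadForm, Matrix.sub_apply, mul_sub, sub_mul, Finset.sum_sub_distrib]
  linarith

lemma quadForm_smul (M : Matrix (Fin d) (Fin d) ℝ) (r : ℝ) (v : Ed d) :
    quadForm M (r • v) = r ^ 2 * quadForm M v := by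
  simp only [quadForm, PiLp.smul_apply, smul_eq_mul, Finset.mul_sum]
  exact Finset.sum_congr rfl fun i _ => Finset.sum_congr rfl fun j _ => by ring

lemma quadForm_continuous (M : Matrix (Fin d) (Fin d) ℝ) :
    Continuous fun v : Ed d => quadForm M v := by
  unfold quadForm
  exact continuous_finset_sum _ fun i _ => continuous_finset_sum _ fun j _ =>
    ((PiLp.continuous_apply (p := 2) (β := fun _ : Fin d => ℝ) i).mul continuous_const).mul
      (PiLp.continuous_apply (p := 2) (β := fun _ : Fin d => ℝ) j)

lemma quadForm_pos {A : Matrix (Fin d) (Fin d) ℝ} (hA : A.PosDef) {v : Ed d} (hv : v ≠ 0) :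
    0 < quadForm A v := by
  rw [quadForm_dot]
  have hvne : (fun i => v i : Fin d → ℝ) ≠ 0 := by
    intro h0
    apply hv
    ext i
    exact congrFun h0 i
  simpa using hA.dotProduct_mulVec_pos hvne

lemma exists_quad_lower {A : Matrix (Fin d) (Fin d) ℝ} (hA : A.PosDef) :
    ∃ a : ℝ, 0 < a ∧ ∀ v : Ed d, a * ‖v‖ ^ 2 ≤ quadForm A v := by
  rcases isEmpty_or_nonempty (Fin d) with hd | hd
  · refine ⟨1, one_pos, fun v => ?_⟩
    simp [quadForm, EuclideanSpace.norm_eq]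
  · have hne : (Metric.sphere (0 : Ed d) 1).Nonempty :=
      ⟨EuclideanSpace.single hd.some 1, by
        simp [mem_sphere_iff_norm, EuclideanSpace.norm_single]⟩
    obtain ⟨v₀, hv₀mem, hv₀min⟩ :=
      (isCompact_sphere (0 : Ed d) 1).exists_isMinOn hne
        (quadForm_continuous A).continuousOn
    have hv₀ : ‖v₀‖ = 1 := mem_sphere_zero_iff_norm.mp hv₀mem
    have hv₀ne : v₀ ≠ 0 := by
      intro h0; rw [h0, norm_zero] at hv₀; norm_num at hv₀
    refine ⟨quadForm A v₀, quadForm_pos hA hv₀ne, fun v => ?_⟩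
    rcases eq_or_ne v 0 with rfl | hv
    · simp [quadForm]
    · have hn : (0:ℝ) < ‖v‖ := norm_pos_iff.mpr hv
      have hw : ‖(‖v‖⁻¹ • v : Ed d)‖ = 1 := by
        rw [norm_smul, norm_inv, norm_norm, inv_mul_cancel₀ hn.ne']
      have hle := isMinOn_iff.mp hv₀min _ (mem_sphere_zero_iff_norm.mpr hw)
      rw [quadForm_smul] at hle
      have h2 : (0:ℝ) < ‖v‖ ^ 2 := by positivity
      have hmul := mul_le_mul_of_nonneg_right hle h2.le
      calc quadForm A v₀ * ‖v‖ ^ 2 ≤ ‖v‖⁻¹ ^ 2 * quadForm A v * ‖v‖ ^ 2 := hmul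
        _ = quadForm A v := by field_simp

lemma exists_quad_upper (A : Matrix (Fin d) (Fin d) ℝ) :
    ∃ b : ℝ, 0 < b ∧ ∀ v : Ed d, quadForm A v ≤ b * ‖v‖ ^ 2 := by
  rcases isEmpty_or_nonempty (Fin d) with hd | hd
  · refine ⟨1, one_pos, fun v => ?_⟩
    have : quadForm A v = 0 := by simp [quadForm]
    rw [this]; positivity
  · have hne : (Metric.sphere (0 : Ed d) 1).Nonempty :=
      ⟨EuclideanSpace.single hd.some 1, by
        simp [mem_sphere_iff_norm, EuclideanSpace.norm_single]⟩
    obtain ⟨v₁, hv₁mem, hv₁max⟩ :=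
      (isCompact_sphere (0 : Ed d) 1).exists_isMaxOn hne
        (quadForm_continuous A).continuousOn
    refine ⟨max (quadForm A v₁) 1, lt_of_lt_of_le one_pos (le_max_right _ _), fun v => ?_⟩
    rcases eq_or_ne v 0 with rfl | hv
    · have : quadForm A (0 : Ed d) = 0 := by simp [quadForm]
      rw [this]; positivity
    · have hn : (0:ℝ) < ‖v‖ := norm_pos_iff.mpr hv
      have hw : ‖(‖v‖⁻¹ • v : Ed d)‖ = 1 := by
        rw [norm_smul, norm_inv, norm_norm, inv_mul_cancel₀ hn.ne']
      have h1 := isMaxOn_iff.mp hv₁max _ (mem_sphere_zero_iff_norm.mpr hw)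
      rw [quadForm_smul] at h1
      have h2 : (0:ℝ) < ‖v‖ ^ 2 := by positivity
      have h3 : ‖v‖⁻¹ ^ 2 * quadForm A v ≤ max (quadForm A v₁) 1 :=
        le_trans h1 (le_max_left _ _)
      have hmul := mul_le_mul_of_nonneg_right h3 h2.le
      calc quadForm A v = ‖v‖⁻¹ ^ 2 * quadForm A v * ‖v‖ ^ 2 := by field_simp
        _ ≤ max (quadForm A v₁) 1 * ‖v‖ ^ 2 := hmul

lemma det_ge_pow {A : Matrix (Fin d) (Fin d) ℝ} (hA : A.PosDef) {a : ℝ} (ha : 0 ≤ a)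
    (h : ∀ v : Ed d, a * ‖v‖ ^ 2 ≤ quadForm A v) : a ^ d ≤ A.det := by
  classical
  have herm := hA.1
  have hdet : A.det = ∏ i, herm.eigenvalues i := by
    simpa using herm.det_eq_prod_eigenvalues
  rw [hdet, show a ^ d = ∏ _i : Fin d, a by simp]
  refine Finset.prod_le_prod (fun i _ => ha) (fun i _ => ?_)
  have hnorm : ‖herm.eigenvectorBasis i‖ = 1 := herm.eigenvectorBasis.orthonormal.1 i
  have hq : herm.eigenvalues i = quadForm A (herm.eigenvectorBasis i) := by
    rw [herm.eigenvalues_eq i, quadForm_dot]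
    simp only [RCLike.re_to_real, star_trivial]
  calc a = a * ‖herm.eigenvectorBasis i‖ ^ 2 := by rw [hnorm]; ring
    _ ≤ quadForm A (herm.eigenvectorBasis i) := h _
    _ = herm.eigenvalues i := hq.symm

lemma inv_quad_lower {A : Matrix (Fin d) (Fin d) ℝ} (hA : A.PosDef) {b : ℝ} (hb : 0 < b)
    (h : ∀ v : Ed d, quadForm A v ≤ b * ‖v‖ ^ 2) (v : Ed d) :
    b⁻¹ * ‖v‖ ^ 2 ≤ quadForm A⁻¹ v := by
  classical
  have hQnn : 0 ≤ quadForm A⁻¹ v := quadForm_nonneg hA.inv.posSemidef v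
  rcases eq_or_ne v 0 with rfl | hv
  · simpa using hQnn
  set u : Fin d → ℝ := fun i => v i with hu
  have hs := hA.posSemidef
  obtain ⟨S, hSS, hSherm⟩ : ∃ S : Matrix (Fin d) (Fin d) ℝ, S * S = A ∧ S.IsHermitian := by
    open scoped MatrixOrder in
    exact ⟨CFC.sqrt A, CFC.sqrt_mul_sqrt_self A hs.nonneg, (CFC.sqrt_nonneg A).posSemidef.1⟩
  have hdS : IsUnit S.det := by
    refine isUnit_iff_ne_zero.mpr fun h0 => ?_
    have hmul : S.det * S.det = A.det := by rw [← det_mul, hSS]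
    rw [h0, mul_zero] at hmul
    exact hA.det_pos.ne' hmul.symm
  have h1 : S * S⁻¹ = 1 := mul_nonsing_inv _ hdS
  have h2 : S⁻¹ * S = 1 := nonsing_inv_mul _ hdS
  have hAinv : A⁻¹ = S⁻¹ * S⁻¹ := by
    apply inv_eq_left_inv
    rw [← hSS, mul_assoc, ← mul_assoc S⁻¹ S S, h2, one_mul, h2]
  have hStr : Sᵀ = S := by
    rw [← conjTranspose_eq_transpose_of_trivial]; exact hSherm
  have hSinvtr : S⁻¹ᵀ = S⁻¹ := by rw [transpose_nonsing_inv, hStr]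
  have key : ∀ (N : Matrix (Fin d) (Fin d) ℝ) (x y : Fin d → ℝ),
      (N *ᵥ x) ⬝ᵥ y = x ⬝ᵥ (Nᵀ *ᵥ y) := by
    intro N x y
    rw [dotProduct_mulVec, vecMul_transpose]
  have hdotsq : ∀ x : Fin d → ℝ, x ⬝ᵥ x = ∑ i, x i ^ 2 := by
    intro x; simp [dotProduct, sq]
  set w : Fin d → ℝ := S⁻¹ *ᵥ u with hw
  have hu2 : S *ᵥ w = u := by rw [hw, mulVec_mulVec, h1, one_mulVec]
  have e1 : w ⬝ᵥ w = quadForm A⁻¹ v := by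
    calc w ⬝ᵥ w = (S⁻¹ *ᵥ u) ⬝ᵥ w := by rw [← hw]
      _ = u ⬝ᵥ (S⁻¹ᵀ *ᵥ w) := key _ _ _
      _ = u ⬝ᵥ (S⁻¹ *ᵥ (S⁻¹ *ᵥ u)) := by rw [hSinvtr, hw]
      _ = u ⬝ᵥ (A⁻¹ *ᵥ u) := by rw [mulVec_mulVec, ← hAinv]
      _ = quadForm A⁻¹ v := by rw [quadForm_dot, ← hu]
  have e2 : (S *ᵥ u) ⬝ᵥ (S *ᵥ u) = quadForm A v := by
    calc (S *ᵥ u) ⬝ᵥ (S *ᵥ u) = u ⬝ᵥ (Sᵀ *ᵥ (S *ᵥ u)) := key _ _ _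
      _ = u ⬝ᵥ (A *ᵥ u) := by rw [hStr, mulVec_mulVec, hSS]
      _ = quadForm A v := by rw [quadForm_dot, ← hu]
  have e3 : u ⬝ᵥ u = (S *ᵥ u) ⬝ᵥ w := by
    calc u ⬝ᵥ u = u ⬝ᵥ (S *ᵥ w) := by rw [hu2]
      _ = u ⬝ᵥ (Sᵀᵀ *ᵥ w) := by rw [transpose_transpose]
      _ = (Sᵀ *ᵥ u) ⬝ᵥ w := (key _ _ _).symm
      _ = (S *ᵥ u) ⬝ᵥ w := by rw [hStr]
  have hnu : u ⬝ᵥ u = ‖v‖ ^ 2 := by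
    rw [hdotsq, ← sum_sq_eq_norm_sq v]
  have hcs := Finset.sum_mul_sq_le_sq_mul_sq Finset.univ (fun i => (S *ᵥ u) i) (fun i => w i)
  have hcs' : (‖v‖ ^ 2) ^ 2 ≤ quadForm A v * quadForm A⁻¹ v := by
    calc (‖v‖ ^ 2) ^ 2 = ((S *ᵥ u) ⬝ᵥ w) ^ 2 := by rw [← hnu, ← e3]
      _ ≤ (∑ i, (S *ᵥ u) i ^ 2) * ∑ i, w i ^ 2 := hcs
      _ = ((S *ᵥ u) ⬝ᵥ (S *ᵥ u)) * (w ⬝ᵥ w) := by rw [hdotsq, hdotsq]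
      _ = quadForm A v * quadForm A⁻¹ v := by rw [e1, e2]
  have hfin : (‖v‖ ^ 2) ^ 2 ≤ (b * ‖v‖ ^ 2) * quadForm A⁻¹ v :=
    le_trans hcs' (mul_le_mul_of_nonneg_right (h v) hQnn)
  have hn2 : (0:ℝ) < ‖v‖ ^ 2 := by
    have : (0:ℝ) < ‖v‖ := norm_pos_iff.mpr hv
    positivity
  have h5 : ‖v‖ ^ 2 * ‖v‖ ^ 2 ≤ (b * quadForm A⁻¹ v) * ‖v‖ ^ 2 := by nlinarith [hfin]
  have h6 : ‖v‖ ^ 2 ≤ b * quadForm A⁻¹ v := le_of_mul_le_mul_right h5 hn2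
  calc b⁻¹ * ‖v‖ ^ 2 ≤ b⁻¹ * (b * quadForm A⁻¹ v) :=
        mul_le_mul_of_nonneg_left h6 (inv_nonneg.mpr hb.le)
    _ = quadForm A⁻¹ v := by field_simp

lemma integrable_gauss {b : ℝ} (hb : 0 < b) :
    Integrable (fun v : Ed d => Real.exp (-b * ‖v‖ ^ 2)) := by
  have hre : (0:ℝ) < ((b : ℂ)).re := by simpa using hb
  have h := (GaussianFourier.integrable_cexp_neg_mul_sq_norm_add (V := Ed d)
    hre 0 (0 : Ed d)).norm
  refine h.congr (Filter.Eventually.of_forall fun v => ?_)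
  simp only [Complex.norm_exp]
  congr 1
  simp
  exact Or.inl (by rw [← Complex.ofReal_pow, Complex.ofReal_re])

lemma tendsto_tail_integral {g : Ed d → ℝ} (hg : Integrable g) (hg0 : ∀ y, 0 ≤ g y) :
    Tendsto (fun r : ℝ => ∫ y in {y : Ed d | r < ‖y‖}, g y) atTop (nhds 0) := by
  have hmeas : ∀ r : ℝ, MeasurableSet {y : Ed d | ‖y‖ ≤ r} := fun r =>
    (isClosed_le continuous_norm continuous_const).measurableSet
  have hcompl : ∀ r : ℝ, {y : Ed d | r < ‖y‖} = {y : Ed d | ‖y‖ ≤ r}ᶜ := by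
    intro r; ext y; simp [not_le]
  have hN : Tendsto (fun n : ℕ => ∫ y in {y : Ed d | ‖y‖ ≤ (n:ℝ)}, g y) atTop (nhds (∫ y, g y)) := by
    have hmono : Monotone fun n : ℕ => {y : Ed d | ‖y‖ ≤ (n:ℝ)} := by
      intro m n hmn y hy
      simp only [Set.mem_setOf_eq] at hy ⊢
      exact le_trans hy (Nat.cast_le.mpr hmn)
    have hunion : ⋃ n : ℕ, {y : Ed d | ‖y‖ ≤ (n:ℝ)} = Set.univ := by
      ext y
      simp only [Set.mem_iUnion, Set.mem_univ, iff_true, Set.mem_setOf_eq]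
      exact exists_nat_ge ‖y‖
    have h := tendsto_setIntegral_of_monotone
      (s := fun n : ℕ => {y : Ed d | ‖y‖ ≤ (n:ℝ)}) (fun n => hmeas (n:ℝ)) hmono
      (by rw [hunion]; exact hg.integrableOn)
    rwa [hunion, setIntegral_univ] at h
  have hNtail : Tendsto (fun n : ℕ => ∫ y in {y : Ed d | (n:ℝ) < ‖y‖}, g y) atTop (nhds 0) := by
    have heq : ∀ n : ℕ, ∫ y in {y : Ed d | (n:ℝ) < ‖y‖}, g y
        = (∫ y, g y) - ∫ y in {y : Ed d | ‖y‖ ≤ (n:ℝ)}, g y := by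
      intro n
      rw [hcompl]
      have h := integral_add_compl (hmeas (n:ℝ)) hg
      linarith
    simp_rw [heq]
    simpa using (tendsto_const_nhds (x := ∫ y, g y) (f := atTop (α := ℕ))).sub hN
  have hfloor : Tendsto (fun r : ℝ => ∫ y in {y : Ed d | ((⌊r⌋₊ : ℕ):ℝ) < ‖y‖}, g y)
      atTop (nhds 0) := hNtail.comp tendsto_nat_floor_atTop
  refine squeeze_zero' ?_ ?_ hfloor
  · exact Eventually.of_forall fun r => integral_nonneg fun y => hg0 y
  · filter_upwards [eventually_ge_atTop (0:ℝ)] with r hr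
    refine setIntegral_mono_set hg.integrableOn (Eventually.of_forall fun y => hg0 y) ?_
    refine HasSubset.Subset.eventuallyLE fun y hy => ?_
    exact lt_of_le_of_lt (Nat.floor_le hr) hy

lemma measurable_q_swap (h : ℝ) (c : Ed d → Ed d) (hc : Measurable c)
    (G : Ed d → Matrix (Fin d) (Fin d) ℝ) (hG : ∀ i j, Measurable fun x => G x i j)
    (hGpd : ∀ x, (G x).PosDef) (x : Ed d) :
    Measurable fun y => mhq h c G y x := by
  have hdetgen : ∀ F : Ed d → Matrix (Fin d) (Fin d) ℝ,
      (∀ i j, Measurable fun y => F y i j) → Measurable fun y => (F y).det := by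
    intro F hF
    simp_rw [Matrix.det_apply']
    exact Finset.measurable_sum _ fun σ _ =>
      measurable_const.mul (Finset.measurable_prod _ fun i _ => hF (σ i) i)
  have hdet : Measurable fun y => (G y).det := hdetgen G hG
  have hadj : ∀ i j, Measurable fun y => (G y).adjugate i j := by
    intro i j
    simp_rw [Matrix.adjugate_apply]
    apply hdetgen
    intro k l
    rcases eq_or_ne k j with hkj | hkj
    · simp only [hkj, Matrix.updateRow_apply, if_pos rfl]
      exact measurable_const
    · simp only [Matrix.updateRow_apply, if_neg hkj]
      exact hG k l
  have hinv : ∀ i j, Measurable fun y => (G y)⁻¹ i j := by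
    intro i j
    have heq : (fun y => (G y)⁻¹ i j) = fun y => ((G y).det)⁻¹ * (G y).adjugate i j := by
      funext y
      rw [Matrix.inv_def, Ring.inverse_eq_inv']
      rfl
    rw [heq]
    exact hdet.inv.mul (hadj i j)
  have hcoord : ∀ i, Measurable fun y => (x - c y) i := by
    intro i
    have heq : (fun y => (x - c y) i) = fun y => x i - (c y) i := by
      funext y; rfl
    rw [heq]
    exact measurable_const.sub
      ((PiLp.continuous_apply (p := 2) (β := fun _ : Fin d => ℝ) i).measurable.comp hc)
  have hquad : Measurable fun y => quadForm (G y)⁻¹ (x - c y) := by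
    unfold quadForm
    exact Finset.measurable_sum _ fun i _ => Finset.measurable_sum _ fun j _ =>
      ((hcoord i).mul (hinv i j)).mul (hcoord j)
  have hdethalf : Measurable fun y => ((G y).det) ^ (-(1:ℝ)/2) := by
    have heq : (fun y => ((G y).det) ^ (-(1:ℝ)/2)) = fun y => (Real.sqrt ((G y).det))⁻¹ := by
      funext y
      rw [show (-(1:ℝ)/2) = -(1/2 : ℝ) by norm_num, Real.rpow_neg (hGpd y).det_pos.le,
        ← Real.sqrt_eq_rpow]
    rw [heq]
    exact (Real.continuous_sqrt.measurable.comp hdet).inv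
  unfold mhq
  exact (measurable_const.mul hdethalf).mul
    (Real.measurable_exp.comp ((hquad.neg).div_const _))

lemma continuous_q_right (h : ℝ) (c : Ed d → Ed d) (G : Ed d → Matrix (Fin d) (Fin d) ℝ)
    (x : Ed d) : Continuous fun y => mhq h c G x y := by
  unfold mhq
  exact continuous_const.mul (Real.continuous_exp.comp
    ((((quadForm_continuous _).comp (continuous_id.sub continuous_const)).neg).div_const _))

end AuxC1

/-- Remark 2 (convergence inwards): under A1 and a uniformly bounded proposal mean,
if the mass that the proposal puts on the inward part of the rejection region
vanishes as `‖x‖ → ∞`, then `C₁ = 0`. -/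
theorem C1_eq_zero_of_inwards
    (d : ℕ) (h : ℝ) (hh : 0 < h)
    (f : Ed d → ℝ) (hfpos : ∀ x, 0 < f x) (hfmeas : Measurable f)
    (c : Ed d → Ed d) (hcmeas : Measurable c)
    (G : Ed d → Matrix (Fin d) (Fin d) ℝ)
    (hGmeas : ∀ i j, Measurable fun x => G x i j)
    (hGpd : ∀ x, (G x).PosDef)
    (G₁ G₂ : Matrix (Fin d) (Fin d) ℝ) (hG₁ : G₁.PosDef) (hG₂ : G₂.PosDef)
    -- A1
    (hA1 : ∀ x, LoewnerLE G₁ (G x) ∧ LoewnerLE (G x) G₂)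
    -- the proposal mean is uniformly bounded
    (M : ℝ) (hM : ∀ x, ‖c x‖ < M)
    -- the inward rejection mass vanishes at infinity
    (hin : Tendsto
      (fun x => ∫ y in rejSet f (mhq h c G) x ∩ {y : Ed d | ‖y‖ ≤ ‖x‖}, mhq h c G x y)
      (normAtTop d) (nhds 0)) :
    C1const f (mhq h c G) = 0 := by
  classical
  obtain ⟨a, ha, hlow⟩ := exists_quad_lower hG₁
  obtain ⟨b, hb, hupp⟩ := exists_quad_upper G₂
  have hlowx : ∀ x (v : Ed d), a * ‖v‖ ^ 2 ≤ quadForm (G x) v := fun x v =>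
    le_trans (hlow v) (quadForm_mono (hA1 x).1 v)
  have huppx : ∀ x (v : Ed d), quadForm (G x) v ≤ b * ‖v‖ ^ 2 := fun x v =>
    le_trans (quadForm_mono (hA1 x).2 v) (hupp v)
  have hdetx : ∀ x, a ^ d ≤ (G x).det := fun x => det_ge_pow (hGpd x) ha.le (hlowx x)
  have hinvx : ∀ x (v : Ed d), b⁻¹ * ‖v‖ ^ 2 ≤ quadForm (G x)⁻¹ v := fun x =>
    inv_quad_lower (hGpd x) hb (huppx x)
  have hM0 : 0 < M := lt_of_le_of_lt (norm_nonneg (c 0)) (hM 0)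
  have hpi : (0:ℝ) < 2 * Real.pi * h := by positivity
  have hapd : (0:ℝ) < a ^ d := by positivity
  set K : ℝ := (2 * Real.pi * h) ^ (-(d:ℝ)/2) * ((a ^ d : ℝ)) ^ (-(1:ℝ)/2) with hK
  have hKpos : 0 < K :=
    mul_pos (Real.rpow_pos_of_pos hpi _) (Real.rpow_pos_of_pos hapd _)
  set ε : ℝ := b⁻¹ / (2 * h) with hε
  have hεpos : 0 < ε := by rw [hε]; positivity
  set g : Ed d → ℝ := fun y => K * Real.exp (-(ε * max (‖y‖ - M) 0 ^ 2)) with hg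
  have hg0 : ∀ y, 0 ≤ g y := fun y => by
    have := (Real.exp_pos (-(ε * max (‖y‖ - M) 0 ^ 2))).le
    rw [hg]
    positivity
  have hqnn : ∀ x y, 0 ≤ mhq h c G x y := by
    intro x y
    unfold mhq
    have h1 := (Real.rpow_pos_of_pos hpi (-(d:ℝ)/2)).le
    have h2 := (Real.rpow_pos_of_pos (hGpd x).det_pos (-(1:ℝ)/2)).le
    have h3 := (Real.exp_pos (-quadForm (G x)⁻¹ (y - c x) / (2 * h))).le
    positivity
  have hqle : ∀ x y, mhq h c G x y ≤ g y := by
    intro x y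
    have hd2 : (G x).det ^ (-(1:ℝ)/2) ≤ ((a ^ d : ℝ)) ^ (-(1:ℝ)/2) :=
      Real.rpow_le_rpow_of_nonpos hapd (hdetx x) (by norm_num)
    have hm2 : max (‖y‖ - M) 0 ^ 2 ≤ ‖y - c x‖ ^ 2 := by
      have h2 : max (‖y‖ - M) 0 ≤ ‖y - c x‖ := by
        rcases max_cases (‖y‖ - M) 0 with ⟨he, _⟩ | ⟨he, _⟩
        · rw [he]
          have h3 : ‖y‖ - ‖c x‖ ≤ ‖y - c x‖ := norm_sub_norm_le y (c x)
          have h4 := (hM x).le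
          linarith
        · rw [he]; positivity
      exact pow_le_pow_left₀ (le_max_right _ _) h2 2
    have h2h : (0:ℝ) < 2 * h := by positivity
    have hquad : ε * max (‖y‖ - M) 0 ^ 2 ≤ quadForm (G x)⁻¹ (y - c x) / (2 * h) := by
      have h1 : b⁻¹ * ‖y - c x‖ ^ 2 ≤ quadForm (G x)⁻¹ (y - c x) := hinvx x _
      have hnum : b⁻¹ * max (‖y‖ - M) 0 ^ 2 ≤ quadForm (G x)⁻¹ (y - c x) :=
        le_trans (mul_le_mul_of_nonneg_left hm2 (inv_nonneg.mpr hb.le)) h1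
      calc ε * max (‖y‖ - M) 0 ^ 2 = (b⁻¹ * max (‖y‖ - M) 0 ^ 2) / (2 * h) := by
            rw [hε]; ring
        _ ≤ quadForm (G x)⁻¹ (y - c x) / (2 * h) := by gcongr
    have hexp : Real.exp (-quadForm (G x)⁻¹ (y - c x) / (2 * h))
        ≤ Real.exp (-(ε * max (‖y‖ - M) 0 ^ 2)) := by
      rw [Real.exp_le_exp, neg_div]
      exact neg_le_neg hquad
    calc mhq h c G x y
        = (2 * Real.pi * h) ^ (-(d:ℝ)/2) * (G x).det ^ (-(1:ℝ)/2) *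
            Real.exp (-quadForm (G x)⁻¹ (y - c x) / (2 * h)) := rfl
      _ ≤ K * Real.exp (-(ε * max (‖y‖ - M) 0 ^ 2)) := by
          rw [hK]
          apply mul_le_mul _ hexp (Real.exp_pos _).le _
          · exact mul_le_mul_of_nonneg_left hd2 (Real.rpow_nonneg hpi.le _)
          · exact (mul_pos (Real.rpow_pos_of_pos hpi _) (Real.rpow_pos_of_pos hapd _)).le
      _ = g y := rfl
  have hm2ge : ∀ t : ℝ, 0 ≤ t → t ^ 2 / 2 - M ^ 2 ≤ max (t - M) 0 ^ 2 := by
    intro t ht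
    rcases le_total t M with h' | h'
    · have h0 : (0:ℝ) ≤ max (t - M) 0 := le_max_right _ _
      nlinarith
    · rw [max_eq_left (by linarith)]
      nlinarith [sq_nonneg (t - 2*M)]
  have hgle : ∀ y : Ed d, g y ≤ (K * Real.exp (ε * M ^ 2)) * Real.exp (-(ε/2) * ‖y‖ ^ 2) := by
    intro y
    have heq : (K * Real.exp (ε * M ^ 2)) * Real.exp (-(ε/2) * ‖y‖ ^ 2)
        = K * Real.exp (ε * M ^ 2 + -(ε/2) * ‖y‖ ^ 2) := by
      rw [mul_assoc, Real.exp_add]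
    rw [hg, heq]
    apply mul_le_mul_of_nonneg_left _ hKpos.le
    rw [Real.exp_le_exp]
    have hcase := hm2ge ‖y‖ (norm_nonneg y)
    nlinarith [mul_le_mul_of_nonneg_left hcase hεpos.le]
  have hgcont : Continuous g := by
    rw [hg]
    apply continuous_const.mul
    apply Real.continuous_exp.comp
    exact (continuous_const.mul
      (((continuous_norm.sub continuous_const).max continuous_const).pow 2)).neg
  have hgint : Integrable g := by
    apply Integrable.mono'
      ((integrable_gauss (d := d) (show (0:ℝ) < ε/2 by positivity)).const_mul
        (K * Real.exp (ε * M ^ 2))) hgcont.aestronglyMeasurable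
    exact Eventually.of_forall fun y => by
      rw [Real.norm_eq_abs, abs_of_nonneg (hg0 y)]
      exact hgle y
  have hqmeasy : ∀ x, Measurable fun y => mhq h c G x y := fun x =>
    (continuous_q_right h c G x).measurable
  have hqswap : ∀ x, Measurable fun y => mhq h c G y x := fun x =>
    measurable_q_swap h c hcmeas G hGmeas hGpd x
  have hαmeas : ∀ x, Measurable fun y => mhAccept f (mhq h c G) x y := by
    intro x
    unfold mhAccept
    exact measurable_const.min
      ((hfmeas.mul (hqswap x)).div (measurable_const.mul (hqmeasy x)))
  have hα0 : ∀ x y, 0 ≤ mhAccept f (mhq h c G) x y := fun x y =>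
    le_min one_pos.le (div_nonneg (mul_nonneg (hfpos y).le (hqnn y x))
      (mul_nonneg (hfpos x).le (hqnn x y)))
  have hα1 : ∀ x y, mhAccept f (mhq h c G) x y ≤ 1 := fun x y => min_le_left _ _
  have hφ0 : ∀ x y, 0 ≤ mhq h c G x y * (1 - mhAccept f (mhq h c G) x y) := fun x y =>
    mul_nonneg (hqnn x y) (by linarith [hα1 x y])
  have hφle : ∀ x y, mhq h c G x y * (1 - mhAccept f (mhq h c G) x y) ≤ mhq h c G x y :=
    fun x y => mul_le_of_le_one_right (hqnn x y) (by linarith [hα0 x y])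
  have hφmeas : ∀ x, Measurable fun y => mhq h c G x y * (1 - mhAccept f (mhq h c G) x y) :=
    fun x => (hqmeasy x).mul (measurable_const.sub (hαmeas x))
  have hqint : ∀ x, Integrable fun y => mhq h c G x y := by
    intro x
    apply hgint.mono' (hqmeasy x).aestronglyMeasurable
    exact Eventually.of_forall fun y => by
      rw [Real.norm_eq_abs, abs_of_nonneg (hqnn x y)]; exact hqle x y
  have hφint : ∀ x, Integrable fun y => mhq h c G x y * (1 - mhAccept f (mhq h c G) x y) := by
    intro x
    apply hgint.mono' (hφmeas x).aestronglyMeasurable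
    exact Eventually.of_forall fun y => by
      rw [Real.norm_eq_abs, abs_of_nonneg (hφ0 x y)]
      exact le_trans (hφle x y) (hqle x y)
  have key : ∀ x, (∫ y in rejSet f (mhq h c G) x,
        mhq h c G x y * (1 - mhAccept f (mhq h c G) x y))
      ≤ (∫ y in rejSet f (mhq h c G) x ∩ {y : Ed d | ‖y‖ ≤ ‖x‖}, mhq h c G x y)
        + ∫ y in {y : Ed d | ‖x‖ < ‖y‖}, g y := by
    intro x
    set R := rejSet f (mhq h c G) x with hR
    set In := {y : Ed d | ‖y‖ ≤ ‖x‖} with hIn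
    have hInm : MeasurableSet In := (isClosed_le continuous_norm continuous_const).measurableSet
    have hsplit := integral_add_compl (μ := volume.restrict R) hInm ((hφint x).restrict)
    rw [Measure.restrict_restrict hInm, Measure.restrict_restrict hInm.compl] at hsplit
    have b1 : (∫ y in In ∩ R, mhq h c G x y * (1 - mhAccept f (mhq h c G) x y))
        ≤ ∫ y in R ∩ In, mhq h c G x y := by
      rw [Set.inter_comm]
      exact integral_mono ((hφint x).restrict) ((hqint x).restrict) (fun y => hφle x y)
    have b2 : (∫ y in Inᶜ ∩ R, mhq h c G x y * (1 - mhAccept f (mhq h c G) x y))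
        ≤ ∫ y in Inᶜ, g y := by
      calc (∫ y in Inᶜ ∩ R, mhq h c G x y * (1 - mhAccept f (mhq h c G) x y))
          ≤ ∫ y in Inᶜ ∩ R, g y :=
            integral_mono ((hφint x).restrict) (hgint.restrict)
              (fun y => le_trans (hφle x y) (hqle x y))
        _ ≤ ∫ y in Inᶜ, g y :=
            setIntegral_mono_set hgint.integrableOn
              (Eventually.of_forall fun y => hg0 y)
              (Set.inter_subset_left).eventuallyLE
    have hcompl : Inᶜ = {y : Ed d | ‖x‖ < ‖y‖} := by
      ext y; simp [hIn, not_le]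
    have b3 : (∫ y in Inᶜ, g y) = ∫ y in {y : Ed d | ‖x‖ < ‖y‖}, g y := by rw [hcompl]
    linarith
  have hnormTT : Tendsto (fun x : Ed d => ‖x‖) (normAtTop d) atTop := tendsto_comap
  have htail : Tendsto (fun x : Ed d => ∫ y in {y : Ed d | ‖x‖ < ‖y‖}, g y)
      (normAtTop d) (nhds 0) := (tendsto_tail_integral hgint hg0).comp hnormTT
  have hbound : Tendsto (fun x =>
      (∫ y in rejSet f (mhq h c G) x ∩ {y : Ed d | ‖y‖ ≤ ‖x‖}, mhq h c G x y)
        + ∫ y in {y : Ed d | ‖x‖ < ‖y‖}, g y) (normAtTop d) (nhds 0) := by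
    simpa using hin.add htail
  have hF : Tendsto (fun x => ∫ y in rejSet f (mhq h c G) x,
      mhq h c G x y * (1 - mhAccept f (mhq h c G) x y)) (normAtTop d) (nhds 0) :=
    squeeze_zero (fun x => integral_nonneg fun y => hφ0 x y) key hbound
  rcases (normAtTop d).eq_or_neBot with hbot | hnb
  · unfold C1const
    rw [hbot]
    have hset : {a : ℝ | ∀ᶠ (x : Ed d) in ⊥, (∫ y in rejSet f (mhq h c G) x,
        mhq h c G x y * (1 - mhAccept f (mhq h c G) x y)) ≤ a} = Set.univ := by
      ext a; simp
    rw [Filter.limsup_eq, hset]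
    apply Real.sInf_of_not_bddBelow
    rintro ⟨x, hx⟩
    have h1 := hx (Set.mem_univ (x - 1))
    linarith
  · exact hF.limsup_eq


end
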